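/- Let m > 0, 0 < p < ∞, and let Φ(z) = az + b with |a| < 1. If (f_n) is a sequence of entire functions with sup_n ∫_ℂ |f_n(z)|^p e^{-p|z|^m} dA(z) < ∞ and f_n → 0 uniformly on compact subsets of ℂ, then ∫_ℂ |f_n(az+b)|^p e^{-p|z|^m} dA(z) → 0 as n → ∞. -/

import Mathlib

open MeasureTheory ENNReal Filter


lemma aux_bound (m p : ℝ) (hm : 0 < m) (hp : 0 < p) :
    ∃ C : ℝ, 0 ≤ C ∧ ∀ t : ℝ, 0 ≤ t → Real.exp (-(p * t ^ m)) ≤ C * (1 + t) ^ (-3 : ℝ) := by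
  have h1 : Tendsto (fun t : ℝ => (t ^ m) ^ (3 / m) * Real.exp (-p * t ^ m)) atTop (nhds 0) :=
    (tendsto_rpow_mul_exp_neg_mul_atTop_nhds_zero (3 / m) p hp).comp (tendsto_rpow_atTop hm)
  have h2 : ∀ᶠ t : ℝ in atTop, (t ^ m) ^ (3 / m) * Real.exp (-p * t ^ m) ≤ 1 :=
    h1.eventually (eventually_le_nhds zero_lt_one)
  obtain ⟨T, hT⟩ := h2.exists_forall_of_atTop
  set T1 := max T 1 with hT1
  refine ⟨max 8 ((1 + T1) ^ (3:ℕ)), le_max_of_le_left (by norm_num), fun t ht => ?_⟩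
  have hrpow : ∀ X : ℝ, 0 < X → X ^ (-3 : ℝ) = (X ^ (3:ℕ))⁻¹ := fun X hX => by
    rw [Real.rpow_neg hX.le, ← Real.rpow_natCast X 3]; norm_num
  rcases le_or_gt t T1 with h | h
  · calc Real.exp (-(p * t ^ m)) ≤ 1 := by
          apply Real.exp_le_one_iff.2; simp only [neg_nonpos]; positivity
      _ ≤ (1 + T1) ^ (3:ℕ) * (1 + t) ^ (-3 : ℝ) := by
          rw [hrpow _ (by linarith), ← div_eq_mul_inv, le_div_iff₀ (by positivity)]
          rw [one_mul]
          exact pow_le_pow_left₀ (by linarith) (by linarith) 3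
      _ ≤ _ := by
          apply mul_le_mul_of_nonneg_right (le_max_right _ _)
          positivity
  · have ht1 : (1:ℝ) ≤ t := (le_max_right T 1).trans h.le
    have key := hT t ((le_max_left T 1).trans h.le)
    rw [← Real.rpow_mul ht, mul_div_cancel₀ 3 hm.ne'] at key
    have ht3 : t ^ (3:ℝ) = t ^ (3:ℕ) := by rw [← Real.rpow_natCast t 3]; norm_num
    rw [ht3, neg_mul] at key
    have hexp : Real.exp (-(p * t ^ m)) ≤ (t ^ (3:ℕ))⁻¹ := by
      rw [← one_div, le_div_iff₀ (by positivity), mul_comm]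
      exact key
    refine hexp.trans ?_
    rw [hrpow _ (by linarith)]
    have h8 : (1 + t) ^ (3:ℕ) ≤ 8 * t ^ (3:ℕ) := by
      have : (1 + t) ≤ 2 * t := by linarith
      calc (1 + t) ^ (3:ℕ) ≤ (2*t) ^ (3:ℕ) := pow_le_pow_left₀ (by linarith) this 3
        _ = 8 * t ^ (3:ℕ) := by ring
    calc (t ^ (3:ℕ))⁻¹ ≤ 8 * ((1 + t) ^ (3:ℕ))⁻¹ := by
          rw [← div_eq_mul_inv, le_div_iff₀ (by positivity), inv_mul_eq_div,
            div_le_iff₀ (by positivity)]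
          linarith
      _ ≤ _ := mul_le_mul_of_nonneg_right (le_max_left _ _) (by positivity)

lemma aux_lintegral_exp_lt_top (m p : ℝ) (hm : 0 < m) (hp : 0 < p)
    (C : ℝ) (hC : 0 ≤ C) (hCb : ∀ t : ℝ, 0 ≤ t → Real.exp (-(p * t ^ m)) ≤ C * (1 + t) ^ (-3 : ℝ)) :
    ∫⁻ z : ℂ, ENNReal.ofReal (Real.exp (-(p * ‖z‖ ^ m))) < ⊤ := by
  have hint : Integrable (fun z : ℂ => C * (1 + ‖z‖) ^ (-3 : ℝ)) :=
    (integrable_one_add_norm (E := ℂ) (by norm_num)).const_mul C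
  calc ∫⁻ z : ℂ, ENNReal.ofReal (Real.exp (-(p * ‖z‖ ^ m)))
      ≤ ∫⁻ z : ℂ, ENNReal.ofReal (C * (1 + ‖z‖) ^ (-3 : ℝ)) := by
        refine lintegral_mono fun z => ENNReal.ofReal_le_ofReal ?_
        exact hCb (‖z‖) (norm_nonneg z)
    _ < ⊤ := hint.lintegral_lt_top

lemma aux_lintegral_affine (a b : ℂ) (ha : a ≠ 0) (H : ℂ → ℝ≥0∞) (hH : Measurable H) :
    ∫⁻ z : ℂ, H (a * z + b) = (ENNReal.ofReal (Complex.normSq a))⁻¹ * ∫⁻ w : ℂ, H w := by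
  have hdet : LinearMap.det (LinearMap.mulLeft ℝ a) = Complex.normSq a := by
    rw [← Algebra.norm_complex_apply, Algebra.norm_apply]; rfl
  have hdet0 : LinearMap.det (LinearMap.mulLeft ℝ a) ≠ 0 := by
    rw [hdet]; exact by simpa using Complex.normSq_pos.2 ha |>.ne'
  have hmap := Measure.map_linearMap_addHaar_eq_smul_addHaar (volume : Measure ℂ) hdet0
  have h1 : ∫⁻ z : ℂ, H (a * z + b) = ∫⁻ z : ℂ, (fun w => H (w + b)) ((LinearMap.mulLeft ℝ a) z) := by
    simp [LinearMap.mulLeft_apply]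
  rw [h1, ← lintegral_map (f := fun w => H (w + b)) (hH.comp (measurable_add_const b))
    (LinearMap.mulLeft ℝ a).continuous_of_finiteDimensional.measurable, hmap]
  rw [lintegral_smul_measure, lintegral_add_right_eq_self (fun w => H w) b]
  congr 1
  rw [hdet, abs_of_nonneg (inv_nonneg.2 (Complex.normSq_nonneg a)),
    ENNReal.ofReal_inv_of_pos (Complex.normSq_pos.2 ha)]


theorem compact_composition_affine_fock (m p : ℝ) (hm : 0 < m) (hp : 0 < p)
    (a b : ℂ) (ha : ‖a‖ < 1) (f : ℕ → ℂ → ℂ)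
    (hf : ∀ n, Differentiable ℂ (f n)) (M : ℝ≥0∞) (hM : M ≠ ⊤)
    (hbd : ∀ n, ∫⁻ z : ℂ,
      ENNReal.ofReal (‖f n z‖ ^ p * Real.exp (-(p * ‖z‖ ^ m))) ≤ M)
    (hconv : TendstoLocallyUniformly f 0 atTop) :
    Tendsto (fun n => ∫⁻ z : ℂ,
        ENNReal.ofReal (‖f n (a * z + b)‖ ^ p *
          Real.exp (-(p * ‖z‖ ^ m))))
      atTop (nhds 0) := by
  have hwt : Continuous fun w : ℂ => Real.exp (-(p * ‖w‖ ^ m)) :=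
    Real.continuous_exp.comp
      ((continuous_const.mul (continuous_norm.rpow_const fun _ => Or.inr hm.le)).neg)
  have hHmeas : ∀ n, Measurable fun w : ℂ =>
      ENNReal.ofReal (‖f n w‖ ^ p * Real.exp (-(p * ‖w‖ ^ m))) := fun n =>
    (ENNReal.continuous_ofReal.comp
      (((continuous_norm.comp (hf n).continuous).rpow_const fun _ => Or.inr hp.le).mul
        hwt)).measurable
  obtain ⟨C, hC, hCb⟩ := aux_bound m p hm hp
  have hJ : ∫⁻ z : ℂ, ENNReal.ofReal (Real.exp (-(p * ‖z‖ ^ m))) < ⊤ :=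
    aux_lintegral_exp_lt_top m p hm hp C hC hCb
  rcases eq_or_ne a 0 with rfl | ha0
  · -- constant case
    simp only [zero_mul, zero_add]
    have hfb : Tendsto (fun n => ‖f n b‖) atTop (nhds 0) := by
      have h0 := hconv.tendstoLocallyUniformlyOn.tendsto_at (Set.mem_univ b)
      have := (continuous_norm.tendsto 0).comp h0
      simpa [Function.comp_def] using this
    have hfp : Tendsto (fun n => ENNReal.ofReal (‖f n b‖ ^ p)) atTop (nhds 0) := by
      have hc : ContinuousAt (fun x : ℝ => x ^ p) 0 := Real.continuousAt_rpow_const 0 p (Or.inr hp.le)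
      have h0 : Tendsto (fun n => ‖f n b‖ ^ p) atTop (nhds 0) := by
        have := hc.tendsto.comp hfb
        simpa [Function.comp_def, Real.zero_rpow hp.ne'] using this
      have := (ENNReal.continuous_ofReal.tendsto 0).comp h0
      simpa [Function.comp_def] using this
    have heq : ∀ n, (∫⁻ z : ℂ,
        ENNReal.ofReal (‖f n b‖ ^ p * Real.exp (-(p * ‖z‖ ^ m))))
        = ENNReal.ofReal (‖f n b‖ ^ p) *
          ∫⁻ z : ℂ, ENNReal.ofReal (Real.exp (-(p * ‖z‖ ^ m))) := by
      intro n
      have hsplit : ∀ z : ℂ, ENNReal.ofReal (‖f n b‖ ^ p *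
          Real.exp (-(p * ‖z‖ ^ m)))
          = ENNReal.ofReal (‖f n b‖ ^ p) *
            ENNReal.ofReal (Real.exp (-(p * ‖z‖ ^ m))) := fun z =>
        ENNReal.ofReal_mul (by positivity)
      simp_rw [hsplit]
      exact lintegral_const_mul _
        (show Measurable fun w : ℂ => ENNReal.ofReal (Real.exp (-(p * ‖w‖ ^ m))) from
          (ENNReal.continuous_ofReal.comp hwt).measurable)
    simp only [heq]
    simpa using ENNReal.Tendsto.mul_const hfp (Or.inr hJ.ne)
  · -- main case
    set θ : ℝ := (1 + ‖a‖) / 2 with hθdef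
    have haa : 0 ≤ ‖a‖ := norm_nonneg a
    have hθa : ‖a‖ < θ := by rw [hθdef]; linarith
    have hθ0 : 0 < θ := by rw [hθdef]; linarith
    have hθ1 : θ < 1 := by rw [hθdef]; linarith
    have hθm : θ ^ m < 1 := Real.rpow_lt_one hθ0.le hθ1 hm
    have hθm0 : 0 ≤ θ ^ m := Real.rpow_nonneg hθ0.le m
    set c : ℝ := p * (1 - θ ^ m) with hcdef
    have hc : 0 < c := by apply mul_pos hp; linarith
    set R0 : ℝ := max 1 (2 * ‖b‖ / (1 - ‖a‖)) with hR0def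
    set cM : ℝ≥0∞ := (ENNReal.ofReal (Complex.normSq a))⁻¹ * M with hcMdef
    have hcM : cM ≠ ⊤ := by
      apply ENNReal.mul_ne_top _ hM
      rw [ENNReal.inv_ne_top]
      exact (ENNReal.ofReal_pos.2 (Complex.normSq_pos.2 ha0)).ne'
    rw [ENNReal.tendsto_nhds_zero]
    intro ε hε
    set ε' : ℝ≥0∞ := min ε 1 with hε'def
    have hε'0 : ε' ≠ 0 := (lt_min hε zero_lt_one).ne'
    have hε'top : ε' ≠ ⊤ := ne_top_of_le_ne_top one_ne_top (min_le_right ε 1)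
    have hhalf : 0 < ε' / 2 := ENNReal.half_pos hε'0
    -- choose R
    have hRtend : Tendsto (fun R : ℝ => ENNReal.ofReal (Real.exp (-(c * R ^ m))) * cM)
        atTop (nhds 0) := by
      have h1 : Tendsto (fun R : ℝ => c * R ^ m) atTop atTop :=
        (tendsto_rpow_atTop hm).const_mul_atTop hc
      have h2 : Tendsto (fun R : ℝ => Real.exp (-(c * R ^ m))) atTop (nhds 0) :=
        Real.tendsto_exp_neg_atTop_nhds_zero.comp h1
      have h3 := (ENNReal.continuous_ofReal.tendsto 0).comp h2
      simp only [Function.comp_def, ENNReal.ofReal_zero] at h3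
      simpa using ENNReal.Tendsto.mul_const h3 (Or.inr hcM)
    obtain ⟨R, hRsm, hRge⟩ :=
      ((hRtend.eventually_lt_const hhalf).and (eventually_ge_atTop R0)).exists
    have hR1 : (1:ℝ) ≤ R := le_trans (le_max_left _ _) hRge
    have hR0 : (0:ℝ) < R := lt_of_lt_of_le zero_lt_one hR1
    -- tail bound
    have htail : ∀ n, (∫⁻ z in (Metric.closedBall (0:ℂ) R)ᶜ,
        ENNReal.ofReal (‖f n (a * z + b)‖ ^ p *
          Real.exp (-(p * ‖z‖ ^ m))))
        ≤ ENNReal.ofReal (Real.exp (-(c * R ^ m))) * cM := by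
      intro n
      have hptw : ∀ z ∈ (Metric.closedBall (0:ℂ) R)ᶜ,
          ENNReal.ofReal (‖f n (a * z + b)‖ ^ p *
            Real.exp (-(p * ‖z‖ ^ m)))
          ≤ ENNReal.ofReal (Real.exp (-(c * R ^ m))) *
            ENNReal.ofReal (‖f n (a * z + b)‖ ^ p *
              Real.exp (-(p * ‖a * z + b‖ ^ m))) := by
        intro z hz
        have hzR : R ≤ ‖z‖ := by
          have := hz
          simp only [Set.mem_compl_iff, Metric.mem_closedBall, dist_zero_right, not_le] at this
          exact this.le
        have hz0 : (0:ℝ) ≤ ‖z‖ := norm_nonneg z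
        have habz : ‖a * z + b‖ ≤ θ * ‖z‖ := by
          have h1 : ‖a * z + b‖ ≤ ‖a‖ * ‖z‖ + ‖b‖ := by
            calc ‖a * z + b‖ ≤ ‖a * z‖ + ‖b‖ :=
                  norm_add_le _ _
              _ = ‖a‖ * ‖z‖ + ‖b‖ := by rw [norm_mul]
          have h2 : ‖b‖ ≤ (1 - ‖a‖) / 2 * ‖z‖ := by
            have hb2 : 2 * ‖b‖ / (1 - ‖a‖) ≤ ‖z‖ :=
              le_trans (le_trans (le_max_right _ _) hRge) hzR
            rw [div_le_iff₀ (by linarith : (0:ℝ) < 1 - ‖a‖)] at hb2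
            linarith
          have : θ * ‖z‖ = ‖a‖ * ‖z‖
              + (1 - ‖a‖) / 2 * ‖z‖ := by rw [hθdef]; ring
          linarith
        have hmine : c * R ^ m + p * ‖a * z + b‖ ^ m ≤ p * ‖z‖ ^ m := by
          have h1 : ‖a * z + b‖ ^ m ≤ θ ^ m * ‖z‖ ^ m := by
            calc ‖a * z + b‖ ^ m ≤ (θ * ‖z‖) ^ m :=
                  Real.rpow_le_rpow (norm_nonneg _) habz hm.le
              _ = θ ^ m * ‖z‖ ^ m := Real.mul_rpow hθ0.le hz0
          have h2 : R ^ m ≤ ‖z‖ ^ m := Real.rpow_le_rpow hR0.le hzR hm.le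
          have h3 : (0:ℝ) ≤ ‖z‖ ^ m := Real.rpow_nonneg hz0 m
          rw [hcdef]
          nlinarith [hp.le]
        have hexp : Real.exp (-(p * ‖z‖ ^ m))
            ≤ Real.exp (-(c * R ^ m)) * Real.exp (-(p * ‖a * z + b‖ ^ m)) := by
          rw [← Real.exp_add]
          apply Real.exp_le_exp.2
          linarith
        rw [← ENNReal.ofReal_mul (Real.exp_nonneg _)]
        apply ENNReal.ofReal_le_ofReal
        calc ‖f n (a * z + b)‖ ^ p * Real.exp (-(p * ‖z‖ ^ m))
            ≤ ‖f n (a * z + b)‖ ^ p *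
              (Real.exp (-(c * R ^ m)) * Real.exp (-(p * ‖a * z + b‖ ^ m))) :=
              mul_le_mul_of_nonneg_left hexp (Real.rpow_nonneg (norm_nonneg _) p)
          _ = Real.exp (-(c * R ^ m)) * (‖f n (a * z + b)‖ ^ p *
              Real.exp (-(p * ‖a * z + b‖ ^ m))) := by ring
      calc (∫⁻ z in (Metric.closedBall (0:ℂ) R)ᶜ,
            ENNReal.ofReal (‖f n (a * z + b)‖ ^ p *
              Real.exp (-(p * ‖z‖ ^ m))))
          ≤ ∫⁻ z in (Metric.closedBall (0:ℂ) R)ᶜ,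
            ENNReal.ofReal (Real.exp (-(c * R ^ m))) *
            ENNReal.ofReal (‖f n (a * z + b)‖ ^ p *
              Real.exp (-(p * ‖a * z + b‖ ^ m))) := by
            apply setLIntegral_mono
            · exact (measurable_const.mul
                ((hHmeas n).comp (by fun_prop : Measurable fun z : ℂ => a * z + b)))
            · exact hptw
        _ ≤ ∫⁻ z : ℂ, ENNReal.ofReal (Real.exp (-(c * R ^ m))) *
            ENNReal.ofReal (‖f n (a * z + b)‖ ^ p *
              Real.exp (-(p * ‖a * z + b‖ ^ m))) :=
            setLIntegral_le_lintegral _ _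
        _ = ENNReal.ofReal (Real.exp (-(c * R ^ m))) *
            ∫⁻ z : ℂ, ENNReal.ofReal (‖f n (a * z + b)‖ ^ p *
              Real.exp (-(p * ‖a * z + b‖ ^ m))) := by
            rw [lintegral_const_mul]
            exact (hHmeas n).comp (by fun_prop : Measurable fun z : ℂ => a * z + b)
        _ = ENNReal.ofReal (Real.exp (-(c * R ^ m))) *
            ((ENNReal.ofReal (Complex.normSq a))⁻¹ *
            ∫⁻ w : ℂ, ENNReal.ofReal (‖f n w‖ ^ p *
              Real.exp (-(p * ‖w‖ ^ m)))) := by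
            rw [aux_lintegral_affine a b ha0 _ (hHmeas n)]
        _ ≤ ENNReal.ofReal (Real.exp (-(c * R ^ m))) * cM := by
            rw [hcMdef]
            exact mul_le_mul_right (mul_le_mul_right (hbd n) _) _
    -- near part
    set K : Set ℂ := Metric.closedBall 0 (‖a‖ * R + ‖b‖) with hKdef
    have huc : TendstoUniformlyOn f 0 atTop K :=
      (tendstoLocallyUniformly_iff_forall_isCompact.1 hconv) K (isCompact_closedBall _ _)
    set V : ℝ≥0∞ := volume (Metric.closedBall (0:ℂ) R) with hVdef
    have hV : V ≠ ⊤ := measure_closedBall_lt_top.ne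
    set η : ℝ≥0∞ := (ε' / 2) / (V + 1) with hηdef
    have hη0 : η ≠ 0 := (ENNReal.div_pos hhalf.ne' (by simp [hV])).ne'
    have hηle : η ≤ ε' / 2 := by
      rw [hηdef, ENNReal.div_eq_inv_mul, mul_comm]
      calc ε' / 2 * (V + 1)⁻¹ ≤ ε' / 2 * 1 := by
            apply mul_le_mul_right
            rw [ENNReal.inv_le_one]
            exact le_add_self
        _ = ε' / 2 := mul_one _
    have hηtop : η ≠ ⊤ :=
      ne_top_of_le_ne_top (by simp [ENNReal.div_eq_inv_mul, ENNReal.mul_ne_top, hε'top] :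
        ε' / 2 ≠ ⊤) hηle
    set δ : ℝ := η.toReal ^ (1 / p) with hδdef
    have hδ0 : 0 < δ := Real.rpow_pos_of_pos (ENNReal.toReal_pos hη0 hηtop) _
    have hδp : ENNReal.ofReal (δ ^ p) = η := by
      rw [hδdef, ← Real.rpow_mul ENNReal.toReal_nonneg, one_div_mul_cancel hp.ne',
        Real.rpow_one, ENNReal.ofReal_toReal hηtop]
    have hev : ∀ᶠ n in atTop, ∀ w ∈ K, ‖f n w‖ < δ := by
      have := (Metric.tendstoUniformlyOn_iff.1 huc) δ hδ0
      filter_upwards [this] with n hn w hw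
      have := hn w hw
      simpa [Complex.dist_eq, norm_sub_rev] using this
    filter_upwards [hev] with n hn
    have hnear : (∫⁻ z in Metric.closedBall (0:ℂ) R,
        ENNReal.ofReal (‖f n (a * z + b)‖ ^ p *
          Real.exp (-(p * ‖z‖ ^ m)))) ≤ ε' / 2 := by
      calc (∫⁻ z in Metric.closedBall (0:ℂ) R,
            ENNReal.ofReal (‖f n (a * z + b)‖ ^ p *
              Real.exp (-(p * ‖z‖ ^ m))))
          ≤ ∫⁻ _ in Metric.closedBall (0:ℂ) R, η := by
            apply setLIntegral_mono measurable_const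
            intro z hz
            have hzR : ‖z‖ ≤ R := by
              simpa [Metric.mem_closedBall, dist_zero_right] using hz
            have hmem : a * z + b ∈ K := by
              rw [hKdef]
              simp only [Metric.mem_closedBall, dist_zero_right]
              calc ‖a * z + b‖ ≤ ‖a‖ * ‖z‖ + ‖b‖ := by
                    simpa [norm_mul] using norm_add_le (a * z) b
                _ ≤ ‖a‖ * R + ‖b‖ := by
                    have := mul_le_mul_of_nonneg_left hzR haa
                    linarith
            have hlt : ‖f n (a * z + b)‖ < δ := hn _ hmem
            rw [← hδp]
            apply ENNReal.ofReal_le_ofReal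
            calc ‖f n (a * z + b)‖ ^ p * Real.exp (-(p * ‖z‖ ^ m))
                ≤ δ ^ p * 1 := by
                  apply mul_le_mul
                  · exact Real.rpow_le_rpow (norm_nonneg _) hlt.le hp.le
                  · apply Real.exp_le_one_iff.2
                    simp only [neg_nonpos]
                    positivity
                  · positivity
                  · positivity
              _ = δ ^ p := mul_one _
        _ = η * V := by rw [setLIntegral_const]
        _ ≤ η * (V + 1) := mul_le_mul_right le_self_add _
        _ = ε' / 2 := by rw [hηdef]; exact ENNReal.div_mul_cancel (by simp) (by simp [hV])
    calc (∫⁻ z : ℂ, ENNReal.ofReal (‖f n (a * z + b)‖ ^ p *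
            Real.exp (-(p * ‖z‖ ^ m))))
        = (∫⁻ z in Metric.closedBall (0:ℂ) R,
            ENNReal.ofReal (‖f n (a * z + b)‖ ^ p *
              Real.exp (-(p * ‖z‖ ^ m)))) +
          ∫⁻ z in (Metric.closedBall (0:ℂ) R)ᶜ,
            ENNReal.ofReal (‖f n (a * z + b)‖ ^ p *
              Real.exp (-(p * ‖z‖ ^ m))) :=
          (lintegral_add_compl _ measurableSet_closedBall).symm
      _ ≤ ε' / 2 + ε' / 2 := add_le_add hnear ((htail n).trans hRsm.le)
      _ = ε' := ENNReal.add_halves ε'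
      _ ≤ ε := min_le_left ε 1
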